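/- Let R be the multivariate polynomial ring over ℤ[z] in the variables a_0, a_1, a_2, …, b, c, and let D be the unique ℤ[z]-linear derivation of R satisfying D(a_j) = a_{j+1}·b^j·c for every j ≥ 0, D(b) = 2b, and D(c) = (1+z)·c. Then for every n ≥ 1, D^n(a_0) = Σ_{k=1}^{n} JS_n^k(z) · a_k · b^{C(k,2)} · c^k, where C(k,2) = k(k−1)/2. -/

import Mathlib

open MvPolynomial

/-- The Jacobi-Stirling numbers of the second kind `JS_n^k(z)`, as polynomials in `ℤ[z]`. -/
noncomputable def JS : ℕ → ℕ → Polynomial ℤ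
  | 0, 0 => 1
  | 0, _ + 1 => 0
  | _ + 1, 0 => 0
  | n + 1, k + 1 =>
      JS n k +
        Polynomial.C ((k : ℤ) + 1) * (Polynomial.C ((k : ℤ) + 1) + Polynomial.X) *
          JS n (k + 1)

/-- The variables `a₀, a₁, a₂, …, b, c`. -/
inductive GVar where
  | a : ℕ → GVar
  | b : GVar
  | c : GVar

lemma JS_zero_right (n : ℕ) (hn : 1 ≤ n) : JS n 0 = 0 := by
  cases n with
  | zero => omega
  | succ n => rfl

lemma JS_eq_zero_of_lt : ∀ n k : ℕ, n < k → JS n k = 0 := by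
  intro n
  induction n with
  | zero =>
    intro k hk
    cases k with
    | zero => omega
    | succ k => rfl
  | succ n ih =>
    intro k hk
    cases k with
    | zero => omega
    | succ k =>
      show JS n k + _ * JS n (k+1) = 0
      rw [ih k (by omega), ih (k+1) (by omega)]
      ring

lemma JS_succ_succ (n k : ℕ) : JS (n+1) (k+1) = JS n k +
    Polynomial.C ((k : ℤ) + 1) * (Polynomial.C ((k : ℤ) + 1) + Polynomial.X) * JS n (k + 1) := rfl

lemma choose_two_succ (k : ℕ) : Nat.choose k 2 + k = Nat.choose (k+1) 2 := by
  rw [Nat.choose_succ_succ, Nat.choose_one_right]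
  simp [Nat.succ_eq_add_one]
  omega

lemma two_mul_choose_two (k : ℕ) : 2 * k.choose 2 + k = k^2 := by
  induction k with
  | zero => rfl
  | succ k ih =>
    rw [← choose_two_succ]
    ring_nf
    ring_nf at ih
    omega

/-- The monomial `a_k b^{C(k,2)} c^k`. -/
noncomputable def Tm (k : ℕ) : MvPolynomial GVar (Polynomial ℤ) :=
  X (GVar.a k) * X GVar.b ^ Nat.choose k 2 * X GVar.c ^ k

/-- The coefficient `k(k+z)`. -/
noncomputable def cf (k : ℕ) : Polynomial ℤ :=
  Polynomial.C (k : ℤ) * (Polynomial.C (k : ℤ) + Polynomial.X)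

lemma smul_pow_pred {R : Type*} [CommRing R] (m : ℕ) (x : R) :
    (m : R) * x ^ (m-1) * x = (m : R) * x ^ m := by
  cases m with
  | zero => simp
  | succ m => rw [Nat.succ_sub_one, pow_succ]; ring

section
variable (D : Derivation (Polynomial ℤ) (MvPolynomial GVar (Polynomial ℤ))
      (MvPolynomial GVar (Polynomial ℤ)))

lemma DTm (ha : ∀ j : ℕ, D (X (GVar.a j)) = X (GVar.a (j + 1)) * X GVar.b ^ j * X GVar.c)
    (hb : D (X GVar.b) = 2 * X GVar.b)
    (hc : D (X GVar.c) = C (1 + Polynomial.X) * X GVar.c) (k : ℕ) :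
    D (Tm k) = Tm (k+1) + C (cf k) * Tm k := by
  unfold Tm cf
  rw [D.leibniz, D.leibniz, D.leibniz_pow, D.leibniz_pow, ha, hb, hc]
  simp only [smul_eq_mul, nsmul_eq_mul]
  rw [← choose_two_succ, pow_add]
  have hb' := smul_pow_pred (Nat.choose k 2) (X GVar.b : MvPolynomial GVar (Polynomial ℤ))
  have hc' := smul_pow_pred k (X GVar.c : MvPolynomial GVar (Polynomial ℤ))
  have hKc : ((k.choose 2 : ℕ) : MvPolynomial GVar (Polynomial ℤ)) * 2 + (k : MvPolynomial GVar (Polynomial ℤ)) = (k : MvPolynomial GVar (Polynomial ℤ))^2 := by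
    rw [show ((k : MvPolynomial GVar (Polynomial ℤ)))^2 = ((k^2 : ℕ) : MvPolynomial GVar (Polynomial ℤ)) by push_cast; ring, ← two_mul_choose_two k]
    push_cast
    ring
  have hCC : C (Polynomial.C (k : ℤ) * (Polynomial.C (k : ℤ) + Polynomial.X))
      + (k : MvPolynomial GVar (Polynomial ℤ))
      = (k : MvPolynomial GVar (Polynomial ℤ))^2
        + (k : MvPolynomial GVar (Polynomial ℤ)) * C (1 + Polynomial.X) := by
    have h1 : (Polynomial.C (k : ℤ)) = ((k : ℕ) : Polynomial ℤ) := by simp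
    rw [map_mul, map_add, h1, map_natCast,
      show C (1 + Polynomial.X) = 1 + (C Polynomial.X : MvPolynomial GVar (Polynomial ℤ)) by
        rw [map_add, map_one]]
    ring
  linear_combination (X (GVar.a k) * X GVar.b ^ (k.choose 2) * C (1 + Polynomial.X)) * hc'
    + (2 * X (GVar.a k) * X GVar.c ^ k) * hb'
    + (X (GVar.a k) * X GVar.b ^ (k.choose 2) * X GVar.c ^ k) * hKc
    - (X (GVar.a k) * X GVar.b ^ (k.choose 2) * X GVar.c ^ k) * hCC

lemma mainH (ha : ∀ j : ℕ, D (X (GVar.a j)) = X (GVar.a (j + 1)) * X GVar.b ^ j * X GVar.c)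
    (hb : D (X GVar.b) = 2 * X GVar.b)
    (hc : D (X GVar.c) = C (1 + Polynomial.X) * X GVar.c) :
    ∀ n : ℕ, 1 ≤ n →
      (fun p => D p)^[n] (X (GVar.a 0)) = ∑ k ∈ Finset.Icc 1 n, C (JS n k) * Tm k := by
  intro n hn
  induction n, hn using Nat.le_induction with
  | base =>
    have h0 := ha 0
    have hJ : JS 1 1 = 1 := by simp [JS]
    simp [Tm, hJ, h0]
  | succ n hn IH =>
    rw [Function.iterate_succ_apply', IH, map_sum]
    have hL : ∀ k ∈ Finset.Icc 1 n, D (C (JS n k) * Tm k)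
        = C (JS n k) * Tm (k+1) + C (cf k * JS n k) * Tm k := by
      intro k _
      rw [← smul_eq_C_mul, D.map_smul, DTm D ha hb hc k, smul_add, smul_eq_C_mul,
        smul_eq_C_mul, map_mul]
      ring
    rw [Finset.sum_congr rfl hL, Finset.sum_add_distrib]
    have hR : ∀ k ∈ Finset.Icc 1 (n+1), C (JS (n+1) k) * Tm k
        = C (JS n (k-1)) * Tm k + C (cf k * JS n k) * Tm k := by
      intro k hk
      simp only [Finset.mem_Icc] at hk
      obtain ⟨m, rfl⟩ : ∃ m, k = m + 1 := ⟨k - 1, by omega⟩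
      have hcf : cf (m+1) = Polynomial.C ((m:ℤ)+1) * (Polynomial.C ((m:ℤ)+1) + Polynomial.X) := by
        unfold cf; push_cast; ring
      rw [JS_succ_succ, Nat.add_sub_cancel, map_add, add_mul, hcf]
    rw [Finset.sum_congr rfl hR, Finset.sum_add_distrib]
    refine congrArg₂ (· + ·) ?_ ?_
    · -- shift: ∑_{Icc 1 n} C (JS n k) * Tm (k+1) = ∑_{Icc 1 (n+1)} C (JS n (k-1)) * Tm k
      rw [show Finset.Icc 1 (n+1) = (Finset.Icc 0 n).map (addRightEmbedding 1) by
        rw [Finset.map_add_right_Icc], Finset.sum_map]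
      simp only [addRightEmbedding_apply, Nat.add_sub_cancel]
      apply Finset.sum_subset
      · intro x hx
        simp only [Finset.mem_Icc] at hx ⊢
        omega
      · intro x hx hx'
        simp only [Finset.mem_Icc] at hx hx'
        have : x = 0 := by omega
        subst this
        rw [JS_zero_right n hn, map_zero, zero_mul]
    · -- extend: ∑_{Icc 1 n} = ∑_{Icc 1 (n+1)}
      apply Finset.sum_subset
      · intro x hx
        simp only [Finset.mem_Icc] at hx ⊢
        omega
      · intro x hx hx'
        simp only [Finset.mem_Icc] at hx hx'
        have : x = n + 1 := by omega
        subst this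
        rw [JS_eq_zero_of_lt n (n+1) (by omega), mul_zero, map_zero, zero_mul]

/-- Any `ℤ[z]`-linear derivation `D` of `ℤ[z][a₀, a₁, …, b, c]` with
`D(aⱼ) = a_{j+1} bʲ c`, `D(b) = 2b` and `D(c) = (1+z)c` satisfies
`Dⁿ(a₀) = Σ_{k=1}^{n} JSₙᵏ(z) a_k b^{C(k,2)} c^k`. -/
theorem grammar_JS
    (D : Derivation (Polynomial ℤ) (MvPolynomial GVar (Polynomial ℤ))
      (MvPolynomial GVar (Polynomial ℤ)))
    (ha : ∀ j : ℕ, D (X (GVar.a j)) = X (GVar.a (j + 1)) * X GVar.b ^ j * X GVar.c)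
    (hb : D (X GVar.b) = 2 * X GVar.b)
    (hc : D (X GVar.c) = C (1 + Polynomial.X) * X GVar.c) :
    ∀ n : ℕ, 1 ≤ n →
      (fun p => D p)^[n] (X (GVar.a 0)) =
        ∑ k ∈ Finset.Icc 1 n,
          C (JS n k) * X (GVar.a k) * X GVar.b ^ Nat.choose k 2 * X GVar.c ^ k := by
  intro n hn
  rw [mainH D ha hb hc n hn]
  apply Finset.sum_congr rfl
  intro k _
  unfold Tm
  ring
end
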